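/- Let m, r ∈ ℕ. Then ∫_0^1 u^m·((log u + 2πi)^r − (log u)^r) du = Σ_{k=0}^{r−1} (−1)^k · (r!/(r−k)!) · (2πi)^{r−k} / (m+1)^{k+1}, where log u denotes the real logarithm, the integrand is complex-valued, and the integral is an (improper) integral over the real interval (0,1). -/

import Mathlib

open Real Complex MeasureTheory Finset

open Set Filter Topology

lemma kh_aux_tendsto (n k : ℕ) (hn : 0 < n) :
    Tendsto (fun x : ℝ => x ^ n * Real.log x ^ k) (𝓝[>] 0) (𝓝 0) := by
  rcases Nat.eq_zero_or_pos k with hk | hk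
  · subst hk
    simpa using ((continuous_pow n).tendsto' 0 0 (by simp [hn.ne'])).mono_left
      nhdsWithin_le_nhds
  · have h := (tendsto_log_mul_rpow_nhdsGT_zero
      (r := (n : ℝ) / k) (by positivity)).pow k
    rw [zero_pow hk.ne'] at h
    refine h.congr' ?_
    filter_upwards [self_mem_nhdsWithin] with x hx
    have hx : (0:ℝ) < x := hx
    rw [mul_pow, ← Real.rpow_natCast (x ^ ((n:ℝ)/k)) k, ← Real.rpow_mul hx.le,
      div_mul_cancel₀ _ (by positivity : (k:ℝ) ≠ 0), Real.rpow_natCast]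
    ring

lemma kh_cont (m k : ℕ) :
    ContinuousOn (fun x : ℝ => x ^ (m+1) * Real.log x ^ k) (Icc 0 1) := by
  intro x hx
  rcases eq_or_ne x 0 with rfl | hx0
  · have h0 : (fun x : ℝ => x ^ (m+1) * Real.log x ^ k) 0 = 0 := by simp
    rw [ContinuousWithinAt, show (0:ℝ) ^ (m+1) * Real.log 0 ^ k = 0 by simp]
    have hmono : 𝓝[Icc (0:ℝ) 1] 0 ≤ 𝓝[Ici (0:ℝ)] 0 :=
      nhdsWithin_mono _ Icc_subset_Ici_self
    refine Tendsto.mono_left ?_ hmono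
    have : Ici (0:ℝ) = insert 0 (Set.Ioi 0) := by
      rw [← Set.Ioi_insert]
    rw [this, nhdsWithin_insert]
    refine Tendsto.sup ?_ (kh_aux_tendsto (m+1) k (Nat.succ_pos m))
    simpa [h0] using tendsto_pure_nhds (fun x : ℝ => x ^ (m+1) * Real.log x ^ k) 0
  · exact (((continuous_pow (m+1)).continuousAt.mul
      ((Real.continuousAt_log hx0).pow k))).continuousWithinAt

lemma kh_antideriv (m j : ℕ) : ∃ F : ℝ → ℝ,
    ContinuousOn F (Icc 0 1) ∧
    (∀ x ∈ Ioo (0:ℝ) 1, HasDerivAt F ((-1)^j * (x ^ m * Real.log x ^ j)) x) ∧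
    F 0 = 0 ∧ F 1 = j.factorial / ((m:ℝ)+1) ^ (j+1) := by
  have hm : ((m:ℝ)+1) ≠ 0 := by positivity
  induction j with
  | zero =>
    refine ⟨fun x => x ^ (m+1) / ((m:ℝ)+1), ?_, ?_, by simp, by simp⟩
    · exact (continuous_pow (m+1)).continuousOn.div_const _
    · intro x hx
      have h := (hasDerivAt_pow (m+1) x).div_const ((m:ℝ)+1)
      refine h.congr_deriv ?_
      rw [Nat.add_sub_cancel]; push_cast
      field_simp
  | succ j ih =>
    obtain ⟨F, hFc, hFd, hF0, hF1⟩ := ih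
    refine ⟨fun x => (-1)^(j+1) * (x ^ (m+1) * Real.log x ^ (j+1)) / ((m:ℝ)+1)
        + ((j:ℝ)+1) / ((m:ℝ)+1) * F x, ?_, ?_, ?_, ?_⟩
    · exact ((((kh_cont m (j+1)).const_smul ((-1:ℝ)^(j+1))).div_const _).add
        (hFc.const_smul (((j:ℝ)+1) / ((m:ℝ)+1))))
    · intro x hx
      have hx0 : (0:ℝ) < x := hx.1
      have h1 : HasDerivAt (fun x : ℝ => x ^ (m+1) * Real.log x ^ (j+1))
          (((m:ℝ)+1) * x ^ m * Real.log x ^ (j+1)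
            + x ^ (m+1) * (((j:ℝ)+1) * Real.log x ^ j * x⁻¹)) x := by
        have hp : HasDerivAt (fun x : ℝ => x ^ (m+1)) (((m:ℝ)+1) * x ^ m) x := by
          simpa using hasDerivAt_pow (m+1) x
        have hl : HasDerivAt (fun x : ℝ => Real.log x ^ (j+1))
            (((j:ℝ)+1) * Real.log x ^ j * x⁻¹) x := by
          simpa using (Real.hasDerivAt_log hx0.ne').fun_pow (j+1)
        simpa [mul_comm, mul_assoc, mul_left_comm] using hp.fun_mul hl
      have h2 := ((h1.const_mul ((-1:ℝ)^(j+1))).div_const ((m:ℝ)+1)).add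
        ((hFd x hx).const_mul (((j:ℝ)+1) / ((m:ℝ)+1)))
      refine h2.congr_deriv ?_
      have hxne : x ≠ 0 := hx0.ne'
      field_simp
      ring
    · simp [hF0]
    · simp only [Real.log_one, ne_eq, Nat.succ_ne_zero, not_false_iff, zero_pow,
        mul_zero, zero_div, zero_add, hF1, Nat.factorial_succ]
      push_cast
      field_simp
      ring

lemma kh_real (m j : ℕ) :
    IntegrableOn (fun x : ℝ => x ^ m * Real.log x ^ j) (Ioc 0 1) volume ∧
    ∫ x in Ioc (0:ℝ) 1, x ^ m * Real.log x ^ j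
      = (-1)^j * j.factorial / ((m:ℝ)+1) ^ (j+1) := by
  obtain ⟨F, hFc, hFd, hF0, hF1⟩ := kh_antideriv m j
  have hpos : ∀ x ∈ Ioo (0:ℝ) 1, 0 ≤ (-1:ℝ)^j * (x ^ m * Real.log x ^ j) := by
    intro x hx
    have hL : Real.log x ≤ 0 := Real.log_nonpos hx.1.le hx.2.le
    have : (-1:ℝ)^j * (x ^ m * Real.log x ^ j) = x ^ m * (-Real.log x) ^ j := by
      rw [neg_pow]; ring
    rw [this]
    exact mul_nonneg (pow_nonneg hx.1.le m) (pow_nonneg (neg_nonneg.2 hL) j)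
  have hInt' : IntegrableOn (fun x : ℝ => (-1:ℝ)^j * (x ^ m * Real.log x ^ j))
      (Ioc 0 1) volume := intervalIntegral.integrableOn_deriv_of_nonneg hFc hFd hpos
  have hInt : IntegrableOn (fun x : ℝ => x ^ m * Real.log x ^ j) (Ioc 0 1) volume := by
    have := hInt'.const_mul ((-1:ℝ)^j)
    simpa [IntegrableOn, ← mul_assoc, ← mul_pow, neg_mul, neg_neg] using this
  refine ⟨hInt, ?_⟩
  have hii : IntervalIntegrable (fun x : ℝ => (-1:ℝ)^j * (x ^ m * Real.log x ^ j))
      volume 0 1 := by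
    rw [intervalIntegrable_iff_integrableOn_Ioc_of_le zero_le_one]
    exact hInt'
  have h1 : ∫ x in (0:ℝ)..1, (-1:ℝ)^j * (x ^ m * Real.log x ^ j) = F 1 - F 0 :=
    intervalIntegral.integral_eq_sub_of_hasDeriv_right_of_le zero_le_one hFc
      (fun x hx => (hFd x hx).hasDerivWithinAt) hii
  rw [intervalIntegral.integral_of_le zero_le_one, hF1, hF0, sub_zero,
    MeasureTheory.integral_const_mul] at h1
  have h2 : ∫ x in Ioc (0:ℝ) 1, x ^ m * Real.log x ^ j
      = (-1:ℝ)^j * (j.factorial / ((m:ℝ)+1) ^ (j+1)) := by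
    have h3 := congrArg (fun t => (-1:ℝ)^j * t) h1
    simpa [← mul_assoc, ← mul_pow, neg_mul, neg_neg] using h3
  rw [h2]; ring

open Complex in
lemma kh_complex (m k : ℕ) :
    IntegrableOn (fun u : ℝ => (u : ℂ) ^ m * ((Real.log u : ℂ)) ^ k) (Ioc 0 1) volume ∧
    ∫ u in Ioc (0:ℝ) 1, (u : ℂ) ^ m * ((Real.log u : ℂ)) ^ k
      = (-1)^k * (k.factorial : ℂ) / ((m:ℂ)+1) ^ (k+1) := by
  obtain ⟨hInt, hVal⟩ := kh_real m k
  have heq : ∀ u : ℝ, (u : ℂ) ^ m * ((Real.log u : ℂ)) ^ k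
      = ((u ^ m * Real.log u ^ k : ℝ) : ℂ) := by intro u; push_cast; ring
  constructor
  · exact (hInt.ofReal).congr (Filter.Eventually.of_forall fun u => (heq u).symm)
  · calc ∫ u in Ioc (0:ℝ) 1, (u : ℂ) ^ m * ((Real.log u : ℂ)) ^ k
        = ∫ u in Ioc (0:ℝ) 1, ((u ^ m * Real.log u ^ k : ℝ) : ℂ) := by
          simp_rw [heq]
      _ = (((∫ u in Ioc (0:ℝ) 1, u ^ m * Real.log u ^ k : ℝ)) : ℂ) :=
          integral_ofReal
      _ = (-1)^k * (k.factorial : ℂ) / ((m:ℂ)+1) ^ (k+1) := by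
          rw [hVal]; push_cast; ring

/-- The case `m ≠ -1` of Appendix Lemma 8.3: the keyhole contour integral of
`u^m log(u)^r` reduces to the difference of the two straight-line pieces, with
value `Σ_{k=0}^{r-1} (-1)^k (r!/(r-k)!) (2πi)^{r-k}/(m+1)^{k+1}`. -/
theorem keyhole_integral_pow_mul_log_pow (m r : ℕ) :
    ∫ u in Set.Ioc (0:ℝ) 1,
        (u : ℂ) ^ m * (((Real.log u : ℂ) + 2 * (π : ℂ) * Complex.I) ^ r -
          ((Real.log u : ℂ)) ^ r) =
      ∑ k ∈ Finset.range r,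
        (-1) ^ k * ((r.factorial : ℂ) / ((r - k).factorial : ℂ)) *
          (2 * (π : ℂ) * Complex.I) ^ (r - k) / ((m : ℂ) + 1) ^ (k + 1) := by
  set c : ℂ := 2 * (π : ℂ) * Complex.I with hc
  have hm1 : ((m:ℂ) + 1) ≠ 0 := by
    have : ((m+1:ℕ):ℂ) ≠ 0 := Nat.cast_ne_zero.2 (Nat.succ_ne_zero m)
    push_cast at this; exact this
  have expand : ∀ u : ℝ,
      (u : ℂ) ^ m * (((Real.log u : ℂ) + c) ^ r - ((Real.log u : ℂ)) ^ r)
      = ∑ k ∈ Finset.range r,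
          (r.choose k : ℂ) * c ^ (r - k) * ((u : ℂ) ^ m * ((Real.log u : ℂ)) ^ k) := by
    intro u
    rw [add_pow, Finset.sum_range_succ]
    simp only [Nat.choose_self, Nat.cast_one, Nat.sub_self, pow_zero, mul_one]
    rw [add_sub_cancel_right, Finset.mul_sum]
    exact Finset.sum_congr rfl fun k _ => by ring
  simp_rw [expand]
  rw [MeasureTheory.integral_finset_sum _
    (fun k _ => ((kh_complex m k).1.const_mul _))]
  refine Finset.sum_congr rfl fun k hk => ?_
  rw [MeasureTheory.integral_const_mul, (kh_complex m k).2]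
  have hkr : k ≤ r := (Finset.mem_range.1 hk).le
  have hrfac : (r.factorial : ℂ)
      = (r.choose k : ℂ) * (k.factorial : ℂ) * ((r-k).factorial : ℂ) := by
    rw [← Nat.choose_mul_factorial_mul_factorial hkr]; push_cast; ring
  have hne : ((r-k).factorial : ℂ) ≠ 0 := Nat.cast_ne_zero.2 (Nat.factorial_ne_zero _)
  rw [hrfac]
  field_simp
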